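/- For a real number b > 0, ∫_0^b ln(x)·√(x(b−x)) dx = (π/16)(2b²ln(b) − b²(4ln 2 − 1)). -/

import Mathlib

open Real MeasureTheory intervalIntegral Set Filter Topology

-- log integrable on [0,1]
lemma intlog01 : IntervalIntegrable Real.log volume 0 1 := by
  have h : IntervalIntegrable (fun x : ℝ => -Real.log x) volume 0 1 := by
    apply intervalIntegrable_deriv_of_nonneg (g := fun x => x - x * Real.log x)
    · exact (continuous_id.sub Real.continuous_mul_log).continuousOn
    · intro x hx
      simp only [ge_iff_le, zero_le_one, min_eq_left, max_eq_right] at hx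
      have hx0 : x ≠ 0 := ne_of_gt hx.1
      exact ((hasDerivAt_id' x).sub (Real.hasDerivAt_mul_log hx0)).congr_deriv (by ring)
    · intro x hx
      simp only [ge_iff_le, zero_le_one, min_eq_left, max_eq_right] at hx
      simp only [neg_nonneg]
      exact Real.log_nonpos hx.1.le hx.2.le
  have h2 := h.neg
  have : (-fun x : ℝ => -Real.log x) = Real.log := by funext x; simp
  rwa [this] at h2

lemma intlog (c : ℝ) (hc : 0 < c) : IntervalIntegrable Real.log volume 0 c := by
  rcases le_total c 1 with h | h
  · exact intlog01.mono_set (by rw [uIcc_of_le hc.le, uIcc_of_le zero_le_one]; exact Icc_subset_Icc le_rfl h)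
  · exact intlog01.trans (intervalIntegrable_log (by rw [uIcc_of_le h]; intro h0; exact absurd h0.1 (by norm_num)))

lemma tendsto_sin_div : Filter.Tendsto (fun θ : ℝ => Real.sin θ / θ) (𝓝[≠] 0) (𝓝 1) := by
  have h := hasDerivAt_iff_tendsto_slope.mp (Real.hasDerivAt_sin 0)
  rw [Real.cos_zero] at h
  refine h.congr' ?_
  filter_upwards [self_mem_nhdsWithin] with θ hθ
  simp [slope_def_field, div_eq_div_iff]

lemma contc : ContinuousOn (fun θ : ℝ => Real.log (Real.sin θ / θ)) (Set.Icc 0 (Real.pi/2)) := by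
  intro θ hθ
  rcases eq_or_ne θ 0 with rfl | hθ0
  · have T : Filter.Tendsto (fun θ : ℝ => Real.log (Real.sin θ / θ)) (𝓝[≠] 0) (𝓝 0) := by
      have := (Real.continuousAt_log one_ne_zero).tendsto.comp tendsto_sin_div
      simpa [Function.comp_def] using this
    have h1 : ContinuousWithinAt (fun θ : ℝ => Real.log (Real.sin θ / θ)) {(0:ℝ)}ᶜ 0 := by
      unfold ContinuousWithinAt
      simpa using T
    have h2 : ContinuousWithinAt (fun θ : ℝ => Real.log (Real.sin θ / θ)) {(0:ℝ)} 0 :=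
      continuousWithinAt_singleton
    exact (h2.union h1).mono (by intro x _; simp [em'])
  · have hθp : 0 < θ := lt_of_le_of_ne hθ.1 (Ne.symm hθ0)
    have hs : Real.sin θ > 0 := Real.sin_pos_of_pos_of_lt_pi hθp (lt_of_le_of_lt hθ.2 (by linarith [Real.pi_pos]))
    exact (ContinuousAt.continuousWithinAt
      ((Real.continuousAt_log (by positivity)).comp
        ((Real.continuous_sin.continuousAt).div continuousAt_id hθ0))) 

lemma logsin_eq : ∀ θ ∈ Set.Icc (0:ℝ) (Real.pi/2),
    Real.log (Real.sin θ) = Real.log θ + Real.log (Real.sin θ / θ) := by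
  intro θ hθ
  rcases eq_or_ne θ 0 with rfl | hθ0
  · simp
  · have hθp : 0 < θ := lt_of_le_of_ne hθ.1 (Ne.symm hθ0)
    have hs : Real.sin θ > 0 := Real.sin_pos_of_pos_of_lt_pi hθp (lt_of_le_of_lt hθ.2 (by linarith [Real.pi_pos]))
    rw [← Real.log_mul hθ0 (by positivity)]
    congr 1
    field_simp

lemma intlogsin : IntervalIntegrable (fun θ => Real.log (Real.sin θ)) volume 0 (Real.pi/2) := by
  have h := (intlog (Real.pi/2) (by positivity)).add
    ((contc.mono (by rw [Set.uIcc_of_le (by positivity : (0:ℝ) ≤ Real.pi/2)])).intervalIntegrable)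
  refine h.congr ?_
  have : Set.uIoc (0:ℝ) (Real.pi/2) ⊆ Set.Icc 0 (Real.pi/2) := by
    rw [Set.uIoc_of_le (by positivity)]; exact Set.Ioc_subset_Icc_self
  intro θ hθ
  exact (logsin_eq θ (this hθ)).symm

lemma intlogcos : IntervalIntegrable (fun θ => Real.log (Real.cos θ)) volume 0 (Real.pi/2) := by
  have h := (intlogsin.comp_sub_left (Real.pi/2)).symm
  have he : (fun x : ℝ => Real.log (Real.sin (Real.pi/2 - x))) = fun x => Real.log (Real.cos x) := by
    funext x; rw [Real.sin_pi_div_two_sub]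
  rw [he] at h
  simpa using h

lemma intlogsin2 : IntervalIntegrable (fun θ => Real.log (Real.sin θ)) volume (Real.pi/2) Real.pi := by
  have h := intlogsin.comp_sub_left Real.pi
  have he : (fun x : ℝ => Real.log (Real.sin (Real.pi - x))) = fun x => Real.log (Real.sin x) := by
    funext x; rw [Real.sin_pi_sub]
  rw [he] at h
  simp only [sub_zero] at h
  have : Real.pi - Real.pi/2 = Real.pi/2 := by ring
  rw [this] at h
  exact h.symm

lemma intlogsinpi : IntervalIntegrable (fun θ => Real.log (Real.sin θ)) volume 0 Real.pi :=
  intlogsin.trans intlogsin2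

lemma Lcos_eq : ∫ θ in (0:ℝ)..(Real.pi/2), Real.log (Real.cos θ)
    = ∫ θ in (0:ℝ)..(Real.pi/2), Real.log (Real.sin θ) := by
  have h := intervalIntegral.integral_comp_sub_left (a := (0:ℝ)) (b := Real.pi/2)
    (fun x => Real.log (Real.sin x)) (Real.pi/2)
  simp only [Real.sin_pi_div_two_sub, sub_zero, sub_self] at h
  rw [← h]

lemma Lsin2_eq : ∫ θ in (Real.pi/2)..Real.pi, Real.log (Real.sin θ)
    = ∫ θ in (0:ℝ)..(Real.pi/2), Real.log (Real.sin θ) := by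
  have h := intervalIntegral.integral_comp_sub_left (a := (Real.pi/2)) (b := Real.pi)
    (fun x => Real.log (Real.sin x)) Real.pi
  simp only [Real.sin_pi_sub, sub_self] at h
  have h2 : Real.pi - Real.pi/2 = Real.pi/2 := by ring
  rw [h2] at h
  rw [← h]

lemma Lsinpi_eq : ∫ θ in (0:ℝ)..Real.pi, Real.log (Real.sin θ)
    = 2 * ∫ θ in (0:ℝ)..(Real.pi/2), Real.log (Real.sin θ) := by
  rw [← intervalIntegral.integral_add_adjacent_intervals intlogsin intlogsin2, Lsin2_eq]
  ring

lemma L0 : ∫ θ in (0:ℝ)..(Real.pi/2), Real.log (Real.sin θ) = -(Real.pi/2) * Real.log 2 := by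
  set L := ∫ θ in (0:ℝ)..(Real.pi/2), Real.log (Real.sin θ) with hL
  have hdouble : ∫ θ in (0:ℝ)..(Real.pi/2), Real.log (Real.sin (2*θ)) = L := by
    rw [intervalIntegral.integral_comp_mul_left (fun x => Real.log (Real.sin x)) two_ne_zero]
    have : (2:ℝ) * (Real.pi/2) = Real.pi := by ring
    rw [mul_zero, this, Lsinpi_eq]
    simp [smul_eq_mul]
    try ring
  have hint2 : IntervalIntegrable (fun θ => Real.log (Real.sin (2*θ))) volume 0 (Real.pi/2) := by
    have := (IntervalIntegrable.comp_mul_left_iff (c := 2) two_ne_zero).mpr intlogsinpi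
    have h0 : (0:ℝ)/2 = 0 := by norm_num
    rwa [h0] at this
  have hne : ∀ᵐ θ : ℝ, θ ≠ Real.pi/2 := by
    rw [ae_iff]
    simp only [not_not, Set.setOf_eq_eq_singleton]
    exact measure_singleton _
  have key : L + L = L - Real.pi/2 * Real.log 2 := by
    calc L + L = ∫ θ in (0:ℝ)..(Real.pi/2),
          (Real.log (Real.sin θ) + Real.log (Real.cos θ)) := by
          rw [intervalIntegral.integral_add intlogsin intlogcos, Lcos_eq, ← hL]
      _ = ∫ θ in (0:ℝ)..(Real.pi/2), (Real.log (Real.sin (2*θ)) - Real.log 2) := by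
          apply intervalIntegral.integral_congr_ae
          filter_upwards [hne] with θ hθne hθ
          rw [Set.uIoc_of_le (by positivity : (0:ℝ) ≤ Real.pi/2)] at hθ
          have hθ1 : 0 < θ := hθ.1
          have hθ2 : θ < Real.pi/2 := lt_of_le_of_ne hθ.2 hθne
          have hs : 0 < Real.sin θ := Real.sin_pos_of_pos_of_lt_pi hθ1 (by linarith [Real.pi_pos])
          have hc : 0 < Real.cos θ := Real.cos_pos_of_mem_Ioo ⟨by linarith [Real.pi_pos], hθ2⟩
          have h2θ : Real.sin (2*θ) = 2*(Real.sin θ * Real.cos θ) := by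
            rw [Real.sin_two_mul]; ring
          rw [h2θ, Real.log_mul two_ne_zero (by positivity),
            Real.log_mul (ne_of_gt hs) (ne_of_gt hc)]
          ring
      _ = (∫ θ in (0:ℝ)..(Real.pi/2), Real.log (Real.sin (2*θ)))
            - ((Real.pi/2 - 0) • Real.log 2) := by
          rw [intervalIntegral.integral_sub hint2 intervalIntegrable_const,
            intervalIntegral.integral_const]
      _ = L - Real.pi/2 * Real.log 2 := by rw [hdouble]; simp
  linarith [key]

lemma sq_identity (θ : ℝ) : Real.sin θ^2 * Real.cos θ^2 = (1 - Real.cos (4*θ))/8 := by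
  have h1 : Real.cos (4*θ) = Real.cos (2*θ)^2 - Real.sin (2*θ)^2 := by
    rw [show (4:ℝ)*θ = 2*(2*θ) by ring, Real.cos_two_mul']
  rw [h1, Real.cos_two_mul', Real.sin_two_mul]
  have h2 := Real.sin_sq_add_cos_sq θ
  nlinarith [h2]

lemma I1 : ∫ θ in (0:ℝ)..(Real.pi/2), Real.sin θ^2 * Real.cos θ^2 = Real.pi/16 := by
  have hd : ∀ θ ∈ Set.uIcc (0:ℝ) (Real.pi/2),
      HasDerivAt (fun t => t/8 - Real.sin (4*t)/32) (Real.sin θ^2 * Real.cos θ^2) θ := by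
    intro θ _
    have h4 : HasDerivAt (fun t : ℝ => 4*t) 4 θ := by
      simpa using (hasDerivAt_id θ).const_mul (4:ℝ)
    have hs : HasDerivAt (fun t : ℝ => Real.sin (4*t)) (Real.cos (4*θ) * 4) θ :=
      (Real.hasDerivAt_sin (4*θ)).comp θ h4
    have := ((hasDerivAt_id θ).div_const 8).sub (hs.div_const 32)
    refine this.congr_deriv ?_
    rw [sq_identity θ]
    ring
  rw [intervalIntegral.integral_eq_sub_of_hasDerivAt hd
    (Continuous.intervalIntegrable (by continuity) _ _)]
  have : (4:ℝ) * (Real.pi/2) = 2 * Real.pi := by ring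
  rw [this, Real.sin_two_pi]
  norm_num [Real.sin_zero]
  try ring

lemma intL4 : IntervalIntegrable (fun θ => Real.cos (4*θ) * Real.log (Real.sin θ))
    volume 0 (Real.pi/2) := by
  apply intlogsin.mono_fun
  · exact ((Real.continuous_cos.comp (continuous_const.mul continuous_id)).aestronglyMeasurable).mul
      ((Real.measurable_log.comp Real.measurable_sin).aestronglyMeasurable)
  · filter_upwards with θ
    simp only [norm_eq_abs, abs_mul]
    exact mul_le_of_le_one_left (abs_nonneg _) (Real.abs_cos_le_one _)

lemma L4 : ∫ θ in (0:ℝ)..(Real.pi/2), Real.cos (4*θ) * Real.log (Real.sin θ) = -(Real.pi/8) := by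
  set H : ℝ → ℝ := fun θ => (Real.cos θ * Real.cos (2*θ)) * (Real.sin θ * Real.log (Real.sin θ))
    - (1/4)*(Real.sin (2*θ) + θ + Real.sin (4*θ)/4) with hH
  have hcont : ContinuousOn H (Set.Icc 0 (Real.pi/2)) := by
    apply Continuous.continuousOn
    exact ((Real.continuous_cos.mul (Real.continuous_cos.comp (continuous_const.mul continuous_id))).mul
      (Real.continuous_mul_log.comp Real.continuous_sin)).sub
      (continuous_const.mul (((Real.continuous_sin.comp (continuous_const.mul continuous_id)).add
        continuous_id).add ((Real.continuous_sin.comp (continuous_const.mul continuous_id)).div_const 4)))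
  have hderiv : ∀ θ ∈ Set.Ioo (0:ℝ) (Real.pi/2),
      HasDerivWithinAt H (Real.cos (4*θ) * Real.log (Real.sin θ)) (Set.Ioi θ) θ := by
    intro θ hθ
    have hs : 0 < Real.sin θ := Real.sin_pos_of_pos_of_lt_pi hθ.1 (by linarith [Real.pi_pos, hθ.2])
    have h2 : HasDerivAt (fun t : ℝ => 2*t) 2 θ := by simpa using (hasDerivAt_id θ).const_mul (2:ℝ)
    have h4 : HasDerivAt (fun t : ℝ => 4*t) 4 θ := by simpa using (hasDerivAt_id θ).const_mul (4:ℝ)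
    have hu : HasDerivAt (fun t => Real.cos t * Real.cos (2*t))
        (-Real.sin θ * Real.cos (2*θ) + Real.cos θ * (-Real.sin (2*θ) * 2)) θ :=
      (Real.hasDerivAt_cos θ).mul ((Real.hasDerivAt_cos (2*θ)).comp θ h2)
    have hv : HasDerivAt (fun t => Real.sin t * Real.log (Real.sin t))
        ((Real.log (Real.sin θ) + 1) * Real.cos θ) θ :=
      (Real.hasDerivAt_mul_log (ne_of_gt hs)).comp θ (Real.hasDerivAt_sin θ)
    have hw : HasDerivAt (fun t => (1/4)*(Real.sin (2*t) + t + Real.sin (4*t)/4))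
        ((1/4)*((Real.cos (2*θ) * 2 + 1) + (Real.cos (4*θ) * 4)/4)) θ := by
      exact ((((Real.hasDerivAt_sin (2*θ)).comp θ h2).add (hasDerivAt_id θ)).add
        ((((Real.hasDerivAt_sin (4*θ)).comp θ h4)).div_const 4)).const_mul (1/4)
    have hfull := (hu.mul hv).sub hw
    apply HasDerivAt.hasDerivWithinAt
    refine hfull.congr_deriv ?_
    have e2c : Real.cos (2*θ) = Real.cos θ^2 - Real.sin θ^2 := Real.cos_two_mul' θ
    have e2s : Real.sin (2*θ) = 2 * Real.sin θ * Real.cos θ := Real.sin_two_mul θ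
    have e4c : Real.cos (4*θ) = Real.cos (2*θ)^2 - Real.sin (2*θ)^2 := by
      rw [show (4:ℝ)*θ = 2*(2*θ) by ring, Real.cos_two_mul']
    have hp := Real.sin_sq_add_cos_sq θ
    rw [e4c, e2c, e2s]
    nlinarith [hp, Real.log (Real.sin θ)]
  rw [intervalIntegral.integral_eq_sub_of_hasDeriv_right_of_le (by positivity) hcont hderiv intL4]
  rw [hH]
  simp only [Real.cos_pi_div_two]
  have a1 : (2:ℝ) * (Real.pi/2) = Real.pi := by ring
  have a2 : (4:ℝ) * (Real.pi/2) = 2*Real.pi := by ring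
  rw [a1, a2]
  simp [Real.sin_pi, Real.sin_two_pi]
  ring

lemma intK : IntervalIntegrable (fun θ => Real.sin θ^2 * Real.cos θ^2 * Real.log (Real.sin θ))
    volume 0 (Real.pi/2) := by
  apply intlogsin.mono_fun
  · exact (((Real.continuous_sin.pow 2).mul (Real.continuous_cos.pow 2)).aestronglyMeasurable).mul
      ((Real.measurable_log.comp Real.measurable_sin).aestronglyMeasurable)
  · filter_upwards with θ
    simp only [norm_eq_abs, abs_mul]
    apply mul_le_of_le_one_left (abs_nonneg _)
    have h1 : |Real.sin θ^2| ≤ 1 := by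
      rw [abs_le]; constructor <;> nlinarith [Real.sin_sq_le_one θ, sq_nonneg (Real.sin θ)]
    have h2 : |Real.cos θ^2| ≤ 1 := by
      rw [abs_le]; constructor <;> nlinarith [Real.cos_sq_le_one θ, sq_nonneg (Real.cos θ)]
    nlinarith [abs_nonneg (Real.sin θ^2), abs_nonneg (Real.cos θ^2)]

lemma Kval : ∫ θ in (0:ℝ)..(Real.pi/2), Real.sin θ^2 * Real.cos θ^2 * Real.log (Real.sin θ)
    = Real.pi/64 - Real.pi * Real.log 2/16 := by
  have heq : (fun θ => Real.sin θ^2 * Real.cos θ^2 * Real.log (Real.sin θ))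
      = fun θ => (1/8) * Real.log (Real.sin θ) - (1/8) * (Real.cos (4*θ) * Real.log (Real.sin θ)) := by
    funext θ
    rw [sq_identity θ]
    ring
  rw [heq, intervalIntegral.integral_sub (intlogsin.const_mul _) (intL4.const_mul _),
    intervalIntegral.integral_const_mul, intervalIntegral.integral_const_mul, L0, L4]
  ring

theorem stmt2 (b : ℝ) (hb : 0 < b) :
    ∫ x in (0:ℝ)..b, Real.log x * Real.sqrt (x * (b - x)) =
      Real.pi / 16 * (2 * b ^ 2 * Real.log b - b ^ 2 * (4 * Real.log 2 - 1)) := by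
  -- continuity of the integrand on [0, b]
  have hgcont : ContinuousOn (fun x => Real.log x * Real.sqrt (x * (b - x))) (Set.Icc 0 b) := by
    have hc : Continuous (fun x : ℝ => (2*(Real.sqrt x * Real.log (Real.sqrt x))) * Real.sqrt (b - x)) := by
      exact (continuous_const.mul (Real.continuous_mul_log.comp Real.continuous_sqrt)).mul
        (Real.continuous_sqrt.comp (continuous_const.sub continuous_id))
    apply hc.continuousOn.congr
    intro x hx
    have hx0 : (0:ℝ) ≤ x := hx.1
    show Real.log x * Real.sqrt (x * (b - x)) = 2*(Real.sqrt x * Real.log (Real.sqrt x)) * Real.sqrt (b - x)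
    rw [Real.sqrt_mul hx0, Real.log_sqrt hx0]
    ring
  -- substitution x = b sin^2 θ
  have h := intervalIntegral.integral_comp_smul_deriv''
    (f := fun θ => b * Real.sin θ^2)
    (f' := fun θ => b * (2 * Real.sin θ * Real.cos θ))
    (g := fun x => Real.log x * Real.sqrt (x * (b - x)))
    (a := (0:ℝ)) (b := Real.pi/2)
    (by exact (continuous_const.mul (Real.continuous_sin.pow 2)).continuousOn)
    (fun θ _ => by
      have hd : HasDerivAt (fun t => b * Real.sin t^2)
          (b * (2 * Real.sin θ * Real.cos θ)) θ := by
        have := ((Real.hasDerivAt_sin θ).pow 2).const_mul b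
        refine this.congr_deriv ?_
        ring
      exact hd.hasDerivWithinAt)
    (by exact (continuous_const.mul ((continuous_const.mul Real.continuous_sin).mul
      Real.continuous_cos)).continuousOn)
    (by
      apply hgcont.mono
      rintro x ⟨θ, _, rfl⟩
      exact ⟨by positivity, mul_le_of_le_one_right hb.le (Real.sin_sq_le_one θ)⟩)
  norm_num [Real.sin_pi_div_two] at h
  calc ∫ x in (0:ℝ)..b, Real.log x * Real.sqrt (x * (b - x))
      = ∫ θ in (0:ℝ)..(Real.pi/2), ((2*b^2*Real.log b) * (Real.sin θ^2 * Real.cos θ^2)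
        + (4*b^2) * (Real.sin θ^2 * Real.cos θ^2 * Real.log (Real.sin θ))) := by
        rw [← h]
        apply intervalIntegral.integral_congr
        intro θ hθ
        rw [Set.uIcc_of_le (by positivity : (0:ℝ) ≤ Real.pi/2)] at hθ
        have hs0 : 0 ≤ Real.sin θ := Real.sin_nonneg_of_nonneg_of_le_pi hθ.1
          (by linarith [Real.pi_pos, hθ.2])
        have hc0 : 0 ≤ Real.cos θ := Real.cos_nonneg_of_mem_Icc
          ⟨by linarith [Real.pi_pos, hθ.1], hθ.2⟩
        simp only [Function.comp_apply, smul_eq_mul]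
        have hsq : Real.sqrt (b * Real.sin θ^2 * (b - b * Real.sin θ^2))
            = b * Real.sin θ * Real.cos θ := by
          have hpy : b - b * Real.sin θ^2 = b * Real.cos θ^2 := by
            nlinarith [Real.sin_sq_add_cos_sq θ]
          rw [hpy, show b * Real.sin θ^2 * (b * Real.cos θ^2) = (b * Real.sin θ * Real.cos θ)^2 by ring]
          exact Real.sqrt_sq (by positivity)
        rw [hsq]
        rcases eq_or_lt_of_le hs0 with hs | hs
        · rw [← hs]; ring
        · rw [Real.log_mul (ne_of_gt hb) (by positivity), Real.log_pow]
          push_cast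
          ring
    _ = Real.pi / 16 * (2 * b ^ 2 * Real.log b - b ^ 2 * (4 * Real.log 2 - 1)) := by
        rw [intervalIntegral.integral_add
            (((by fun_prop : Continuous (fun θ : ℝ => (2*b^2*Real.log b) * (Real.sin θ^2 * Real.cos θ^2)))).intervalIntegrable _ _)
            (intK.const_mul _),
          intervalIntegral.integral_const_mul, intervalIntegral.integral_const_mul, I1, Kval]
        ring
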